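/- arXiv:1806.02108 — 2 statements merged into one kernel-verified Lean document; each statement's English description precedes it below -/
import Mathlib

section
/- Assume Setup: C k-linear Hom-finite triangulated with split idempotents, n = 2d even, t a 2d-cluster tilting object with T = add(t), and S ⊆ C a d-cluster tilting subcategory with Σ^d S = S and t ∈ S, so S is a (d+2)-angulated category with d-suspension Σ^d and t is an Oppermann–Thomas cluster tilting object in S. Then for every s ∈ S, the (d+2)-angulated index index^⬠_T(s) = Σ_{i=0}^d (−1)^i [t_i] (computed from a (d+2)-angle t_d → ⋯ → t_0 → s → Σ^d t_d with t_i ∈ T and radical maps) equals the triangulated index index_T(s) computed in C. -/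
open CategoryTheory Category Limits Pretriangulated Opposite

universe v u

section Defs

variable {C : Type u} [Category.{v} C]

section Add

variable [Preadditive C] [HasFiniteBiproducts C]

/-- `x` lies in `add t`: it is a direct summand of a finite direct sum of copies of `t`. -/
def inAdd (t x : C) : Prop :=
  ∃ (n : ℕ) (i : x ⟶ ⨁ (fun _ : Fin n => t)) (r : ⨁ (fun _ : Fin n => t) ⟶ x),
    i ≫ r = 𝟙 x

end Add

/-- A morphism lies in the radical of the category. -/
def radMor [Preadditive C] {x y : C} (f : x ⟶ y) : Prop :=
  ∀ g : y ⟶ x, IsIso (𝟙 x - f ≫ g)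

/-- An object is indecomposable. -/
def IndecObj [Preadditive C] [HasBinaryBiproducts C] (s : C) : Prop :=
  ¬ IsZero s ∧ ∀ (a b : C), (s ≅ a ⊞ b) → IsZero a ∨ IsZero b

/-- Every object has a precover by an object of `Tset` (contravariant finiteness). -/
def IsPrecovering (Tset : Set C) : Prop :=
  ∀ c : C, ∃ (x : C) (f : x ⟶ c), x ∈ Tset ∧
    ∀ x' ∈ Tset, ∀ g : x' ⟶ c, ∃ h : x' ⟶ x, h ≫ f = g

/-- Every object has a preenvelope by an object of `Tset` (covariant finiteness). -/
def IsPreenveloping (Tset : Set C) : Prop :=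
  ∀ c : C, ∃ (x : C) (f : c ⟶ x), x ∈ Tset ∧
    ∀ x' ∈ Tset, ∀ g : c ⟶ x', ∃ h : x ⟶ x', f ≫ h = g

/-- `f : x ⟶ c` is a `Tset`-cover: a right minimal `Tset`-approximation. -/
def IsTCover (Tset : Set C) {x c : C} (f : x ⟶ c) : Prop :=
  x ∈ Tset ∧ (∀ x' ∈ Tset, ∀ g : x' ⟶ c, ∃ h : x' ⟶ x, h ≫ f = g) ∧
    ∀ φ : x ⟶ x, φ ≫ f = f → IsIso φ

section Shift

variable [Preadditive C] [HasShift C ℤ]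

/-- `Tset` is an `n`-cluster tilting subcategory: it is functorially finite and coincides with
both `Ext^{1..n-1}`-orthogonals of itself. -/
structure IsClusterTiltingSub (n : ℕ) (Tset : Set C) : Prop where
  precovering : IsPrecovering Tset
  preenveloping : IsPreenveloping Tset
  mem_iff_ext₁ : ∀ c : C, c ∈ Tset ↔
    ∀ i : ℕ, 1 ≤ i → i ≤ n - 1 → ∀ x ∈ Tset, ∀ f : x ⟶ c⟦(i : ℤ)⟧, f = 0
  mem_iff_ext₂ : ∀ c : C, c ∈ Tset ↔
    ∀ i : ℕ, 1 ≤ i → i ≤ n - 1 → ∀ x ∈ Tset, ∀ f : c ⟶ x⟦(i : ℤ)⟧, f = 0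

/-- `t` is an `n`-cluster tilting object: `add t` is an `n`-cluster tilting subcategory. -/
def IsClusterTiltingObj [HasFiniteBiproducts C] (n : ℕ) (t : C) : Prop :=
  IsClusterTiltingSub n {x : C | inAdd t x}

end Shift

section Tri

variable [Preadditive C] [HasZeroObject C] [HasShift C ℤ]
  [∀ n : ℤ, (shiftFunctor C n).Additive] [Pretriangulated C]

/-- The Iyama–Yoshino star operation `X * Y` on full subcategories. -/
def star (X Y : Set C) : Set C :=
  {c | ∃ (x y : C) (f : x ⟶ c) (g : c ⟶ y) (h : y ⟶ x⟦(1 : ℤ)⟧),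
    Triangle.mk f g h ∈ (distTriang C) ∧ x ∈ X ∧ y ∈ Y}

/-- Iterated star operation `X₁ * X₂ * ⋯ * Xₘ`. -/
def starList : List (Set C) → Set C
  | [] => {c | IsZero c}
  | [X] => X
  | X :: Y :: L => star X (starList (Y :: L))

/-- A tower of triangles connecting the objects `cobj (m+1), cobj m, …, cobj 1, cobj 0`:
triangles `w (i+1) ⟶ cobj (i+1) ⟶ w i ⟶ (w (i+1))⟦1⟧` for `i < m`, with
`w 0 = cobj 0` and `w m = cobj (m+1)`. -/
structure TriTower (m : ℕ) (cobj : ℕ → C) where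
  w : ℕ → C
  fmor : ∀ i : ℕ, w (i + 1) ⟶ cobj (i + 1)
  gmor : ∀ i : ℕ, cobj (i + 1) ⟶ w i
  hmor : ∀ i : ℕ, w i ⟶ (w (i + 1))⟦(1 : ℤ)⟧
  mem : ∀ i < m, Triangle.mk (fmor i) (gmor i) (hmor i) ∈ distTriang C
  w_zero : w 0 = cobj 0
  w_top : w m = cobj (m + 1)

/-- The composite `w 0 ⟶ Σʲ (w j)` of the (suitably shifted) wavy morphisms of a tower. -/
noncomputable def towerComp {m : ℕ} {cobj : ℕ → C} (tw : TriTower m cobj) :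
    ∀ j : ℕ, (tw.w 0 ⟶ (tw.w j)⟦(j : ℤ)⟧)
  | 0 => (shiftFunctorZero' C ((0 : ℕ) : ℤ) (by simp)).inv.app (tw.w 0)
  | (j + 1) => towerComp tw j ≫ (shiftFunctor C (j : ℤ)).map (tw.hmor j) ≫
      (shiftFunctorAdd' C (1 : ℤ) (j : ℤ) ((j + 1 : ℕ) : ℤ) (by push_cast; ring)).inv.app
        (tw.w (j + 1))

/-- The full composite `cobj 0 ⟶ Σᵐ (cobj (m+1))` of the wavy morphisms of a tower. -/
noncomputable def towerGamma {m : ℕ} {cobj : ℕ → C} (tw : TriTower m cobj) :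
    cobj 0 ⟶ (cobj (m + 1))⟦(m : ℤ)⟧ :=
  eqToHom tw.w_zero.symm ≫ towerComp tw m ≫ eqToHom (by rw [tw.w_top])

/-- `cls` is constant on isomorphism classes of objects of `Tset` and additive on biproducts
of objects of `Tset`; quantifying over all such `cls` encodes identities in the split
Grothendieck group `K₀^{sp}(Tset)`. -/
def IsAddOn [HasFiniteBiproducts C] (Tset : Set C) {G : Type*} [AddCommGroup G]
    (cls : C → G) : Prop :=
  (∀ x y : C, x ∈ Tset → y ∈ Tset → Nonempty (x ≅ y) → cls x = cls y) ∧
  (∀ x y : C, x ∈ Tset → y ∈ Tset → cls (x ⊞ y) = cls x + cls y)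

/-- `ind` is the triangulated index with respect to `Tset`: for each `c` there is a tower of
triangles built from `Tset`-covers, and `ind c` is the alternating sum of the classes of its
`Tset`-objects. -/
def IsIndex [HasFiniteBiproducts C] (n : ℕ) (Tset : Set C) {G : Type*} [AddCommGroup G]
    (cls ind : C → G) : Prop :=
  ∀ c : C, ∃ (cobj : ℕ → C) (tw : TriTower (n - 1) cobj),
    cobj 0 = c ∧ (∀ i < n - 1, IsTCover Tset (tw.gmor i)) ∧ cobj n ∈ Tset ∧
    ind c = ∑ i ∈ Finset.range n, ((-1 : ℤ) ^ i) • cls (cobj (i + 1))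

/-- `ind` is the `(d+2)`-angulated index with respect to `Tset`: for each `s ∈ Sset` there is a
`(d+2)`-angle (encoded as a tower of triangles) `t_d → ⋯ → t_0 → s → Σ^d t_d` with `t_i ∈ Tset`
and radical maps, and `ind s` is the alternating sum of the classes of the `t_i`. -/
def IsHigherIndex [HasFiniteBiproducts C] (d : ℕ) (Tset Sset : Set C) {G : Type*}
    [AddCommGroup G] (cls ind : C → G) : Prop :=
  ∀ s ∈ Sset, ∃ (cobj : ℕ → C) (tw : TriTower d cobj),
    cobj 0 = s ∧ (∀ i, 1 ≤ i → i ≤ d + 1 → cobj i ∈ Tset) ∧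
    (∀ j : ℕ, j + 2 ≤ d → radMor (tw.gmor (j + 1) ≫ tw.fmor j)) ∧
    (∀ j : ℕ, (hj : j + 1 = d) →
      radMor ((eqToHom (show cobj (d + 1) = tw.w (j + 1) by rw [hj, tw.w_top]) :
        cobj (d + 1) ⟶ tw.w (j + 1)) ≫ tw.fmor j)) ∧
    ind s = ∑ i ∈ Finset.range (d + 1), ((-1 : ℤ) ^ i) • cls (cobj (i + 1))

/-- `t` is an Oppermann–Thomas cluster tilting object of the `(d+2)`-angulated category `Sset`:
`Hom(t, Σ^d t) = 0`, and every `s ∈ Sset` admits a `(d+2)`-angle (encoded as a tower)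
`t_d → ⋯ → t_0 → s → Σ^d t_d` with all `t_i ∈ add t`. -/
def IsOTClusterTilting [HasFiniteBiproducts C] (d : ℕ) (Sset : Set C) (t : C) : Prop :=
  t ∈ Sset ∧ (∀ f : t ⟶ t⟦(d : ℤ)⟧, f = 0) ∧
    ∀ s ∈ Sset, ∃ (cobj : ℕ → C) (tw : TriTower d cobj),
      cobj 0 = s ∧ ∀ i, 1 ≤ i → i ≤ d + 1 → inAdd t (cobj i)

/-- A `N`-Calabi–Yau structure on `Sset`: a bifunctorial perfect pairing
`Hom(x,y) × Hom(y, x⟦N⟧) → k`, encoding natural isomorphisms `Hom(x,y) ≅ D Hom(y, x⟦N⟧)`. -/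
structure CYData (k : Type*) [Field k] [Linear k C] (Sset : Set C) (N : ℤ) where
  pair : ∀ x y : C, (x ⟶ y) → (y ⟶ x⟦N⟧) → k
  add_left : ∀ x y, x ∈ Sset → y ∈ Sset → ∀ (f f' : x ⟶ y) (g : y ⟶ x⟦N⟧),
    pair x y (f + f') g = pair x y f g + pair x y f' g
  add_right : ∀ x y, x ∈ Sset → y ∈ Sset → ∀ (f : x ⟶ y) (g g' : y ⟶ x⟦N⟧),
    pair x y f (g + g') = pair x y f g + pair x y f g'
  smul_left : ∀ x y, x ∈ Sset → y ∈ Sset → ∀ (a : k) (f : x ⟶ y) (g : y ⟶ x⟦N⟧),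
    pair x y (a • f) g = a * pair x y f g
  smul_right : ∀ x y, x ∈ Sset → y ∈ Sset → ∀ (a : k) (f : x ⟶ y) (g : y ⟶ x⟦N⟧),
    pair x y f (a • g) = a * pair x y f g
  assoc : ∀ x y z, x ∈ Sset → y ∈ Sset → z ∈ Sset →
    ∀ (f : x ⟶ y) (g : y ⟶ z) (h : z ⟶ x⟦N⟧),
    pair x z (f ≫ g) h = pair x y f (g ≫ h)
  nondeg_left : ∀ x y, x ∈ Sset → y ∈ Sset → ∀ f : x ⟶ y,
    (∀ g : y ⟶ x⟦N⟧, pair x y f g = 0) → f = 0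
  nondeg_right : ∀ x y, x ∈ Sset → y ∈ Sset → ∀ g : y ⟶ x⟦N⟧,
    (∀ f : x ⟶ y, pair x y f g = 0) → g = 0

end Tri

end Defs

open ZeroObject

section Aux

variable {C : Type u} [Category.{v} C]

section A
variable [Preadditive C]

lemma isIso_one_sub_swap {X Y : C} (a : X ⟶ Y) (b : Y ⟶ X)
    (h : IsIso (𝟙 X - a ≫ b)) : IsIso (𝟙 Y - b ≫ a) := by
  set c := inv (𝟙 X - a ≫ b) with hc
  have hc1 : (𝟙 X - a ≫ b) ≫ c = 𝟙 X := IsIso.hom_inv_id _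
  have hc2 : c ≫ (𝟙 X - a ≫ b) = 𝟙 X := IsIso.inv_hom_id _
  have h1 : a ≫ b ≫ c = c - 𝟙 X := by
    rw [Preadditive.sub_comp, id_comp] at hc1
    rw [← assoc]
    linear_combination (norm := abel) -hc1
  have h2 : c ≫ a ≫ b = c - 𝟙 X := by
    rw [Preadditive.comp_sub, comp_id] at hc2
    linear_combination (norm := abel) -hc2
  refine ⟨𝟙 Y + b ≫ c ≫ a, ?_, ?_⟩
  · have key : b ≫ (a ≫ b ≫ c) ≫ a = b ≫ (c - 𝟙 X) ≫ a := by rw [h1]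
    simp only [Preadditive.sub_comp, Preadditive.comp_sub, Preadditive.add_comp,
      Preadditive.comp_add, id_comp, comp_id, assoc] at key ⊢
    linear_combination (norm := abel) -key
  · have key : b ≫ (c ≫ a ≫ b) ≫ a = b ≫ (c - 𝟙 X) ≫ a := by rw [h2]
    simp only [Preadditive.sub_comp, Preadditive.comp_sub, Preadditive.add_comp,
      Preadditive.comp_add, id_comp, comp_id, assoc] at key ⊢
    linear_combination (norm := abel) -key

end A

section Covers

variable {Tset : Set C}

lemma isTCover_comp_iso {x c c' : C} {f : x ⟶ c} (hf : IsTCover Tset f) (e : c ≅ c') :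
    IsTCover Tset (f ≫ e.hom) := by
  obtain ⟨hx, happrox, hmin⟩ := hf
  refine ⟨hx, ?_, ?_⟩
  · intro x' hx' g
    obtain ⟨h, hh⟩ := happrox x' hx' (g ≫ e.inv)
    exact ⟨h, by rw [← assoc, hh, assoc, e.inv_hom_id, comp_id]⟩
  · intro φ hφ
    apply hmin
    have := hφ =≫ e.inv
    simpa using this

lemma isTCover_eqconj {x c x' c' : C} {f : x ⟶ c} (hf : IsTCover Tset f)
    (h1 : x' = x) (h2 : c = c') :
    IsTCover Tset (eqToHom h1 ≫ f ≫ eqToHom h2) := by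
  subst h1; subst h2; simpa using hf

lemma isTCover_eqToHom {x c : C} (h : x = c) (hx : x ∈ Tset) :
    IsTCover Tset (eqToHom h) := by
  subst h
  refine ⟨hx, fun x' hx' g => ⟨g, by simp⟩, fun φ hφ => ?_⟩
  simp only [eqToHom_refl, comp_id] at hφ
  rw [hφ]; infer_instance

lemma isTCover_zero_of_isZero [Limits.HasZeroMorphisms C] {x c : C} (hx : IsZero x)
    (hc : IsZero c) (hmem : x ∈ Tset) (f : x ⟶ c) : IsTCover Tset f := by
  refine ⟨hmem, fun x' hx' g => ⟨0, hc.eq_of_tgt _ _⟩, fun φ hφ => ?_⟩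
  have : φ = 𝟙 x := hx.eq_of_tgt _ _
  rw [this]; infer_instance

lemma cover_unique {x x' c : C} {f : x ⟶ c} {f' : x' ⟶ c}
    (hf : IsTCover Tset f) (hf' : IsTCover Tset f') :
    ∃ e : x ≅ x', e.hom ≫ f' = f := by
  obtain ⟨hx, happrox, hmin⟩ := hf
  obtain ⟨hx', happrox', hmin'⟩ := hf'
  obtain ⟨h, hh⟩ := happrox' x hx f
  obtain ⟨h', hh'⟩ := happrox x' hx' f'
  have hiso1 : IsIso (h ≫ h') := hmin _ (by rw [assoc, hh', hh])
  have hiso2 : IsIso (h' ≫ h) := hmin' _ (by rw [assoc, hh, hh'])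
  have : IsSplitEpi h := ⟨⟨⟨inv (h' ≫ h) ≫ h', by rw [assoc, IsIso.inv_hom_id]⟩⟩⟩
  have : Mono h := ⟨fun g₁ g₂ hg => by
    have e : ∀ {Z : C} (g : Z ⟶ x), ((g ≫ h) ≫ h') ≫ inv (h ≫ h') = g := fun g => by
      rw [assoc, assoc, ← assoc h h', IsIso.hom_inv_id, comp_id]
    calc g₁ = ((g₁ ≫ h) ≫ h') ≫ inv (h ≫ h') := (e g₁).symm
      _ = ((g₂ ≫ h) ≫ h') ≫ inv (h ≫ h') := by rw [hg]
      _ = g₂ := e g₂⟩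
  have : IsIso h := isIso_of_mono_of_isSplitEpi h
  exact ⟨asIso h, hh⟩

lemma cover_unique_iso {x x' c c' : C} {f : x ⟶ c} {f' : x' ⟶ c'}
    (hf : IsTCover Tset f) (hf' : IsTCover Tset f') (e : c ≅ c') :
    ∃ h : x ≅ x', h.hom ≫ f' = f ≫ e.hom :=
  cover_unique (isTCover_comp_iso hf e) hf'

end Covers

section Zero0

variable [Preadditive C] [HasFiniteBiproducts C]

instance : HasBinaryBiproducts C := hasBinaryBiproducts_of_finite_biproducts C

lemma inAdd_of_isZero {t x : C} (hx : IsZero x) : inAdd t x :=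
  ⟨0, 0, 0, by rw [comp_zero]; exact (hx.eq_of_src _ _)⟩

end Zero0

section Zero

variable [Preadditive C] [HasFiniteBiproducts C] [HasZeroObject C] [HasShift C ℤ]
  [∀ n : ℤ, (shiftFunctor C n).Additive] [Pretriangulated C]

lemma cls_isZero {Tset : Set C} {G : Type*} [AddCommGroup G] {cls : C → G}
    (hcls : IsAddOn Tset cls) (hz : ∀ z : C, IsZero z → z ∈ Tset)
    {x : C} (hx : IsZero x) : cls x = 0 := by
  have hbz : IsZero (x ⊞ x) := by
    rw [IsZero.iff_id_eq_zero]
    apply biprod.hom_ext <;> apply hx.eq_of_tgt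
  have h1 : cls (x ⊞ x) = cls x := hcls.1 _ _ (hz _ hbz) (hz _ hx) ⟨hbz.iso hx⟩
  have h2 : cls (x ⊞ x) = cls x + cls x := hcls.2 _ _ (hz _ hx) (hz _ hx)
  have := h1.symm.trans h2
  exact (left_eq_add.mp this)

end Zero

end Aux


section Tri2

variable {C : Type u} [Category.{v} C]
variable [Preadditive C] [HasZeroObject C] [HasShift C ℤ]
  [∀ n : ℤ, (shiftFunctor C n).Additive] [Pretriangulated C]

lemma hom_zero_shift_assoc {A X : C} (m : ℤ) (h : ∀ f : X ⟶ A⟦m + 1⟧, f = 0)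
    (g : X ⟶ (A⟦m⟧)⟦(1 : ℤ)⟧) : g = 0 := by
  have h0 : g ≫ (shiftFunctorAdd' C m 1 (m + 1) rfl).inv.app A = 0 := h _
  have := h0 =≫ (shiftFunctorAdd' C m 1 (m + 1) rfl).hom.app A
  simpa using this

lemma hom_vanish_triangle (T : Triangle C) (hT : T ∈ distTriang C) {X : C}
    (h2 : ∀ f : X ⟶ T.obj₂, f = 0) (h1 : ∀ f : X ⟶ (T.obj₁)⟦(1 : ℤ)⟧, f = 0) :
    ∀ f : X ⟶ T.obj₃, f = 0 := fun f => by
  obtain ⟨g, hg⟩ := Triangle.coyoneda_exact₃ T hT f (h1 _)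
  rw [hg, h2 g, zero_comp]

lemma hom_vanish_triangle_shift (T : Triangle C) (hT : T ∈ distTriang C) {X : C} (m : ℤ)
    (h2 : ∀ f : X ⟶ (T.obj₂)⟦m⟧, f = 0) (h1 : ∀ f : X ⟶ (T.obj₁)⟦m + 1⟧, f = 0) :
    ∀ f : X ⟶ (T.obj₃)⟦m⟧, f = 0 := by
  have hT' : (Pretriangulated.Triangle.shiftFunctor C m).obj T ∈ distTriang C :=
    Triangle.shift_distinguished T hT m
  intro f
  exact hom_vanish_triangle _ hT' h2 (fun g => hom_zero_shift_assoc m h1 g) f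

lemma triangle_iso_step {T₁ T₂ : Triangle C} (hT₁ : T₁ ∈ distTriang C)
    (hT₂ : T₂ ∈ distTriang C) (b : T₁.obj₂ ≅ T₂.obj₂) (c : T₁.obj₃ ≅ T₂.obj₃)
    (comm : T₁.mor₂ ≫ c.hom = b.hom ≫ T₂.mor₂) : Nonempty (T₁.obj₁ ≅ T₂.obj₁) := by
  obtain ⟨a, ha₁, ha₂⟩ :=
    complete_distinguished_triangle_morphism₁ T₁ T₂ hT₁ hT₂ b.hom c.hom comm
  let φ : T₁ ⟶ T₂ := ⟨a, b.hom, c.hom, ha₁, comm, ha₂⟩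
  have h2 : IsIso φ.hom₂ := by dsimp [φ]; infer_instance
  have h3 : IsIso φ.hom₃ := by dsimp [φ]; infer_instance
  have : IsIso φ.hom₁ := isIso₁_of_isIso₂₃ φ hT₁ hT₂ h2 h3
  exact ⟨asIso a⟩

lemma tower_cobj_iso {Tset : Set C} {m : ℕ} {c₁ c₂ : ℕ → C} (tw₁ : TriTower m c₁)
    (tw₂ : TriTower m c₂) (h0 : c₁ 0 = c₂ 0)
    (hc₁ : ∀ i < m, IsTCover Tset (tw₁.gmor i)) (hc₂ : ∀ i < m, IsTCover Tset (tw₂.gmor i)) :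
    ∀ i, 1 ≤ i → i ≤ m + 1 → Nonempty (c₁ i ≅ c₂ i) := by
  have W : ∀ j, j ≤ m → Nonempty (tw₁.w j ≅ tw₂.w j) := by
    intro j
    induction j with
    | zero => exact fun _ => ⟨eqToIso (tw₁.w_zero.trans (h0.trans tw₂.w_zero.symm))⟩
    | succ j ih =>
      intro hj1
      have hj : j < m := hj1
      obtain ⟨e⟩ := ih (le_of_lt hj)
      obtain ⟨h, hcomm⟩ := cover_unique_iso (hc₁ j hj) (hc₂ j hj) e
      exact triangle_iso_step (tw₁.mem j hj) (tw₂.mem j hj) h e hcomm.symm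
  intro i h1 h2
  rcases Nat.lt_or_ge i (m + 1) with hi | hi
  · obtain ⟨j, rfl⟩ : ∃ j, i = j + 1 := ⟨i - 1, by omega⟩
    have hj : j < m := by omega
    obtain ⟨e⟩ := W j (by omega)
    obtain ⟨h, _⟩ := cover_unique_iso (hc₁ j hj) (hc₂ j hj) e
    exact ⟨h⟩
  · have : i = m + 1 := le_antisymm h2 hi
    subst this
    obtain ⟨e⟩ := W m le_rfl
    exact ⟨eqToIso tw₁.w_top.symm ≪≫ e ≪≫ eqToIso tw₂.w_top⟩

end Tri2

section Pad

variable {C : Type u} [Category.{v} C]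
variable [Preadditive C] [HasZeroObject C] [HasShift C ℤ]
  [∀ n : ℤ, (shiftFunctor C n).Additive] [Pretriangulated C]

/-- Objects of the padded tower. -/
noncomputable def padCobj (d : ℕ) (cobj : ℕ → C) (i : ℕ) : C :=
  if i ≤ d + 1 then cobj i else 0

/-- Auxiliary objects of the padded tower. -/
noncomputable def padW (d : ℕ) {cobj : ℕ → C} (tw : TriTower d cobj) (i : ℕ) : C :=
  if i ≤ d then tw.w i else 0

lemma padCobj_eq (d : ℕ) (cobj : ℕ → C) {i : ℕ} (h : i ≤ d + 1) :
    padCobj d cobj i = cobj i := if_pos h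

lemma padCobj_zero (d : ℕ) (cobj : ℕ → C) {i : ℕ} (h : ¬ i ≤ d + 1) :
    padCobj d cobj i = 0 := if_neg h

lemma padW_eq (d : ℕ) {cobj : ℕ → C} (tw : TriTower d cobj) {i : ℕ} (h : i ≤ d) :
    padW d tw i = tw.w i := if_pos h

lemma padW_zero (d : ℕ) {cobj : ℕ → C} (tw : TriTower d cobj) {i : ℕ} (h : ¬ i ≤ d) :
    padW d tw i = 0 := if_neg h

lemma isZero_padW (d : ℕ) {cobj : ℕ → C} (tw : TriTower d cobj) {i : ℕ} (h : ¬ i ≤ d) :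
    IsZero (padW d tw i) := (padW_zero d tw h) ▸ isZero_zero C

lemma isZero_padCobj (d : ℕ) (cobj : ℕ → C) {i : ℕ} (h : ¬ i ≤ d + 1) :
    IsZero (padCobj d cobj i) := (padCobj_zero d cobj h) ▸ isZero_zero C

noncomputable def padF (d : ℕ) {cobj : ℕ → C} (tw : TriTower d cobj) (i : ℕ) :
    padW d tw (i + 1) ⟶ padCobj d cobj (i + 1) :=
  if h : i + 1 ≤ d then
    eqToHom (padW_eq d tw h) ≫ tw.fmor i ≫ eqToHom (padCobj_eq d cobj (by omega)).symm
  else 0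

noncomputable def padG (d : ℕ) {cobj : ℕ → C} (tw : TriTower d cobj) (i : ℕ) :
    padCobj d cobj (i + 1) ⟶ padW d tw i :=
  if h : i + 1 ≤ d then
    eqToHom (padCobj_eq d cobj (by omega)) ≫ tw.gmor i ≫ eqToHom (padW_eq d tw (by omega)).symm
  else if h2 : i = d then
    eqToHom (show padCobj d cobj (i + 1) = padW d tw i by
      subst h2; rw [padCobj_eq _ _ le_rfl, padW_eq _ _ le_rfl, tw.w_top])
  else 0

noncomputable def padH (d : ℕ) {cobj : ℕ → C} (tw : TriTower d cobj) (i : ℕ) :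
    padW d tw i ⟶ (padW d tw (i + 1))⟦(1 : ℤ)⟧ :=
  if h : i + 1 ≤ d then
    eqToHom (padW_eq d tw (by omega)) ≫ tw.hmor i ≫
      eqToHom (show (tw.w (i + 1))⟦(1 : ℤ)⟧ = (padW d tw (i + 1))⟦(1 : ℤ)⟧ by
        rw [padW_eq d tw h])
  else 0

lemma dist_conj {X Y Z X' Y' Z' : C} (f : X ⟶ Y) (g : Y ⟶ Z) (h : Z ⟶ X⟦(1 : ℤ)⟧)
    (hd : Triangle.mk f g h ∈ distTriang C) (e1 : X' = X) (e2 : Y' = Y) (e3 : Z' = Z) :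
    Triangle.mk (eqToHom e1 ≫ f ≫ eqToHom e2.symm) (eqToHom e2 ≫ g ≫ eqToHom e3.symm)
      (eqToHom e3 ≫ h ≫ eqToHom (show X⟦(1 : ℤ)⟧ = X'⟦(1 : ℤ)⟧ by rw [e1])) ∈
      distTriang C := by
  subst e1; subst e2; subst e3; simpa using hd

lemma dist_zero_iso {Z X Y : C} (hZ : IsZero Z) (e : X = Y) :
    Triangle.mk (0 : Z ⟶ X) (eqToHom e) (0 : Y ⟶ Z⟦(1 : ℤ)⟧) ∈ distTriang C := by
  subst e
  refine isomorphic_distinguished _ (contractible_distinguished₁ X) _ ?_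
  exact Triangle.isoMk _ _ (hZ.iso (isZero_zero C)) (Iso.refl _) (Iso.refl _)
    (hZ.eq_of_src _ _) (by exact (comp_id _).trans (id_comp _).symm)
    (by exact zero_comp.trans comp_zero.symm)

lemma dist_all_zero {X Y Z : C} (hX : IsZero X) (hY : IsZero Y) (hZ : IsZero Z) :
    Triangle.mk (0 : X ⟶ Y) (0 : Y ⟶ Z) (0 : Z ⟶ X⟦(1 : ℤ)⟧) ∈ distTriang C := by
  refine isomorphic_distinguished _ (contractible_distinguished (0 : C)) _ ?_
  exact Triangle.isoMk _ _ (hX.iso (isZero_zero C)) (hY.iso (isZero_zero C))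
    (hZ.iso (isZero_zero C)) (hX.eq_of_src _ _) (hY.eq_of_src _ _) (hZ.eq_of_src _ _)

noncomputable def padTower (d : ℕ) {cobj : ℕ → C} (tw : TriTower d cobj) (hd : 1 ≤ d) :
    TriTower (2 * d - 1) (padCobj d cobj) where
  w := padW d tw
  fmor := padF d tw
  gmor := padG d tw
  hmor := padH d tw
  mem := by
    intro i _
    by_cases h : i + 1 ≤ d
    · rw [padF, padG, padH, dif_pos h, dif_pos h, dif_pos h]
      exact dist_conj _ _ _ (tw.mem i (by omega)) _ _ _
    · by_cases h2 : i = d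
      · rw [padF, padG, padH, dif_neg h, dif_neg h, dif_neg h, dif_pos h2]
        exact dist_zero_iso (isZero_padW d tw (by omega)) _
      · rw [padF, padG, padH, dif_neg h, dif_neg h, dif_neg h, dif_neg h2]
        exact dist_all_zero (isZero_padW d tw (by omega)) (isZero_padCobj d cobj (by omega))
          (isZero_padW d tw (by omega))
  w_zero := by rw [padW_eq d tw (by omega), padCobj_eq d cobj (by omega), tw.w_zero]
  w_top := by
    by_cases h : d = 1
    · subst h
      rw [padW_eq 1 tw (by omega), padCobj_eq 1 cobj (by omega)]
      exact tw.w_top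
    · rw [padW_zero d tw (by omega), padCobj_zero d cobj (by omega)]

end Pad

variable {C : Type u} [Category.{v} C]

theorem stmt13 (k : Type*) [Field k] [Preadditive C] [CategoryTheory.Linear k C] [HasZeroObject C]
    [HasShift C ℤ] [∀ n : ℤ, (shiftFunctor C n).Additive] [Pretriangulated C]
    [HasFiniteBiproducts C] [IsIdempotentComplete C]
    [∀ X Y : C, FiniteDimensional k (X ⟶ Y)]
    (d : ℕ) (hd : 1 ≤ d) (t : C) (ht : IsClusterTiltingObj (2 * d) t)
    (Sset : Set C) (hS : IsClusterTiltingSub d Sset)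
    (hSshift : ∀ s : C, s ∈ Sset ↔ s⟦(d : ℤ)⟧ ∈ Sset) (htS : t ∈ Sset)
    {G : Type*} [AddCommGroup G] (cls indC indP : C → G)
    (hcls : IsAddOn {x : C | inAdd t x} cls)
    (hindC : IsIndex (2 * d) {x : C | inAdd t x} cls indC)
    (hindP : IsHigherIndex d {x : C | inAdd t x} Sset cls indP)
    (s : C) (hs : s ∈ Sset) : indP s = indC s := by
  classical
  obtain ⟨cobj, tw, h0, hmem, hrad1, hrad2, hsum⟩ := hindP s hs
  have hzmem : ∀ z : C, IsZero z → z ∈ {x : C | inAdd t x} := fun z hz => inAdd_of_isZero hz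
  have hext : ∀ c : C, c ∈ {x : C | inAdd t x} → ∀ m : ℕ, 1 ≤ m → m ≤ 2 * d - 1 →
      ∀ x ∈ {x : C | inAdd t x}, ∀ f : x ⟶ c⟦(m : ℤ)⟧, f = 0 := by
    intro c hc m h1 h2 x hx f
    exact (ht.mem_iff_ext₁ c).1 hc m h1 h2 x hx f
  -- Hom-vanishing into the shifted auxiliary objects of the (d+2)-angle tower
  have V : ∀ k j, j + k = d → ∀ m : ℤ, 1 ≤ m → m ≤ (d : ℤ) - 1 + (j : ℤ) →
      ∀ x ∈ {x : C | inAdd t x}, ∀ f : x ⟶ (tw.w j)⟦m⟧, f = 0 := by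
    intro k
    induction k with
    | zero =>
      intro j hj m hm1 hm2 x hx f
      have hjd : j = d := by omega
      subst hjd
      obtain ⟨mn, rfl⟩ : ∃ n : ℕ, m = (n : ℤ) :=
        ⟨m.toNat, (Int.toNat_of_nonneg (by omega)).symm⟩
      have e : (tw.w j)⟦(mn : ℤ)⟧ = (cobj (j + 1))⟦(mn : ℤ)⟧ := by rw [tw.w_top]
      have h0' : f ≫ eqToHom e = 0 :=
        hext (cobj (j + 1)) (hmem (j + 1) (by omega) (by omega)) mn (by omega)
          (by omega) x hx _
      have h1' := h0' =≫ eqToHom e.symm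
      simpa using h1'
    | succ k ih =>
      intro j hj m hm1 hm2 x hx f
      have hT := tw.mem j (by omega)
      refine hom_vanish_triangle_shift _ hT m ?_ ?_ f
      · intro g
        obtain ⟨mn, rfl⟩ : ∃ n : ℕ, m = (n : ℤ) :=
          ⟨m.toNat, (Int.toNat_of_nonneg (by omega)).symm⟩
        exact hext (cobj (j + 1)) (hmem (j + 1) (by omega) (by omega)) mn (by omega)
          (by omega) x hx g
      · intro g
        exact ih (j + 1) (by omega) (m + 1) (by omega) (by push_cast; omega) x hx g
  -- the maps in the (d+2)-angle tower are covers
  have cover : ∀ i, i < d → IsTCover {x : C | inAdd t x} (tw.gmor i) := by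
    intro i hi
    refine ⟨hmem (i + 1) (by omega) (by omega), ?_, ?_⟩
    · intro x' hx' g
      have hg0 : g ≫ tw.hmor i = 0 :=
        V (d - (i + 1)) (i + 1) (by omega) 1 le_rfl (by push_cast; omega) x' hx' _
      obtain ⟨h, hh⟩ := Triangle.coyoneda_exact₃ _ (tw.mem i hi) g hg0
      exact ⟨h, hh.symm⟩
    · intro φ hφ
      have h1 : (𝟙 (cobj (i + 1)) - φ) ≫ tw.gmor i = 0 := by
        rw [Preadditive.sub_comp, id_comp, hφ, sub_self]
      obtain ⟨u, hu⟩ := Triangle.coyoneda_exact₂ _ (tw.mem i hi) (𝟙 _ - φ) h1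
      by_cases hcase : i + 1 < d
      · have hu0 : u ≫ tw.hmor (i + 1) = 0 :=
          V (d - (i + 2)) (i + 2) (by omega) 1 le_rfl (by push_cast; omega) _
            (hmem (i + 1) (by omega) (by omega)) _
        obtain ⟨v, hv⟩ := Triangle.coyoneda_exact₃ _ (tw.mem (i + 1) hcase) u hu0
        have hswap := isIso_one_sub_swap _ v (hrad1 i (by omega) v)
        have hφeq : φ = 𝟙 _ - v ≫ (tw.gmor (i + 1) ≫ tw.fmor i) := by
          have h2 : 𝟙 (cobj (i + 1)) - φ = v ≫ (tw.gmor (i + 1) ≫ tw.fmor i) := by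
            exact hu.trans ((congrArg (fun x : cobj (i + 1) ⟶ tw.w (i + 1) => x ≫ tw.fmor i) hv).trans (assoc _ _ _))
          rw [← h2, sub_sub_cancel]
        rw [hφeq]
        exact hswap
      · have hd1 : i + 1 = d := by omega
        have e : tw.w (i + 1) = cobj (d + 1) := by rw [hd1, tw.w_top]
        have hrad := hrad2 i hd1
        have hswap := isIso_one_sub_swap _ (u ≫ eqToHom e) (hrad (u ≫ eqToHom e))
        have hφeq : φ = 𝟙 _ - (u ≫ eqToHom e) ≫
            ((eqToHom (show cobj (d + 1) = tw.w (i + 1) by rw [hd1, tw.w_top]) :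
              cobj (d + 1) ⟶ tw.w (i + 1)) ≫ tw.fmor i) := by
          have h2 : 𝟙 (cobj (i + 1)) - φ = (u ≫ eqToHom e) ≫
              ((eqToHom (show cobj (d + 1) = tw.w (i + 1) by rw [hd1, tw.w_top]) :
                cobj (d + 1) ⟶ tw.w (i + 1)) ≫ tw.fmor i) := by
            rw [show 𝟙 (cobj (i + 1)) - φ = u ≫ tw.fmor i from hu]
            exact (congrArg (fun x : tw.w (i + 1) ⟶ cobj (i + 1) => u ≫ x) (by simp : tw.fmor i = eqToHom e ≫ eqToHom (show cobj (d + 1) = tw.w (i + 1) by rw [hd1, tw.w_top]) ≫ tw.fmor i)).trans (assoc _ _ _).symm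
          rw [← h2, sub_sub_cancel]
        rw [hφeq]
        exact hswap
  -- the padded tower of triangles computes the triangulated index
  have pcover : ∀ i, i < 2 * d - 1 →
      IsTCover {x : C | inAdd t x} ((padTower d tw hd).gmor i) := by
    intro i hi
    show IsTCover _ (padG d tw i)
    by_cases h : i + 1 ≤ d
    · rw [padG, dif_pos h]
      exact isTCover_eqconj (cover i (by omega)) _ _
    · by_cases h2 : i = d
      · rw [padG, dif_neg h, dif_pos h2]
        refine isTCover_eqToHom _ ?_
        rw [padCobj_eq d cobj (by omega)]
        exact hmem (i + 1) (by omega) (by omega)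
      · rw [padG, dif_neg h, dif_neg h2]
        exact isTCover_zero_of_isZero (isZero_padCobj d cobj (by omega))
          (isZero_padW d tw (by omega)) (hzmem _ (isZero_padCobj d cobj (by omega))) _
  obtain ⟨cobj₂, tw₂, h0₂, hcov₂, htop₂, hsum₂⟩ := hindC s
  have isos := tower_cobj_iso (padTower d tw hd) tw₂
    (by rw [padCobj_eq d cobj (by omega), h0, h0₂]) pcover hcov₂
  have pmem : ∀ i, 1 ≤ i → i ≤ 2 * d → padCobj d cobj i ∈ {x : C | inAdd t x} := by
    intro i h1 h2
    by_cases h : i ≤ d + 1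
    · rw [padCobj_eq d cobj h]
      exact hmem i h1 h
    · exact hzmem _ (isZero_padCobj d cobj h)
  have mem₂ : ∀ i, 1 ≤ i → i ≤ 2 * d → cobj₂ i ∈ {x : C | inAdd t x} := by
    intro i h1 h2
    rcases Nat.lt_or_ge i (2 * d) with hi | hi
    · obtain ⟨j, rfl⟩ : ∃ j, i = j + 1 := ⟨i - 1, by omega⟩
      exact (hcov₂ j (by omega)).1
    · have hieq : i = 2 * d := by omega
      subst hieq
      exact htop₂
  have clseq : ∀ i, 1 ≤ i → i ≤ 2 * d → cls (padCobj d cobj i) = cls (cobj₂ i) :=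
    fun i h1 h2 => hcls.1 _ _ (pmem i h1 h2) (mem₂ i h1 h2) (isos i h1 (by omega))
  have hclszero : ∀ i, d + 1 ≤ i → cls (padCobj d cobj (i + 1)) = 0 := fun i hi =>
    cls_isZero hcls hzmem (isZero_padCobj d cobj (by omega))
  calc indP s = ∑ i ∈ Finset.range (d + 1), ((-1 : ℤ) ^ i) • cls (cobj (i + 1)) := hsum
    _ = ∑ i ∈ Finset.range (d + 1), ((-1 : ℤ) ^ i) • cls (padCobj d cobj (i + 1)) := by
        refine Finset.sum_congr rfl fun i hi => ?_
        rw [padCobj_eq d cobj (by simp only [Finset.mem_range] at hi; omega)]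
    _ = ∑ i ∈ Finset.range (2 * d), ((-1 : ℤ) ^ i) • cls (padCobj d cobj (i + 1)) := by
        refine Finset.sum_subset (Finset.range_subset_range.2 (by omega)) fun i hi hni => ?_
        simp only [Finset.mem_range] at hi hni
        rw [hclszero i (by omega), smul_zero]
    _ = ∑ i ∈ Finset.range (2 * d), ((-1 : ℤ) ^ i) • cls (cobj₂ (i + 1)) := by
        refine Finset.sum_congr rfl fun i hi => ?_
        simp only [Finset.mem_range] at hi
        rw [clseq (i + 1) (by omega) (by omega)]
    _ = indC s := hsum₂.symm
end

section
/- In the setup above (S a d-cluster tilting subcategory of C closed under Σ^d, t a 2d-cluster tilting object of C lying in S, T = add(t)): if s ∈ S and 0 ≤ i ≤ d−1, then index_T(Σ^i s) = (−1)^i index_T(s) in K_0^{sp}(T). -/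
open CategoryTheory Category Limits Pretriangulated Opposite

universe v u

variable {C : Type u} [Category.{v} C]

section MyHelpers

open ZeroObject

lemma my_neg_pow_succ_smul {G : Type*} [AddCommGroup G] (i : ℕ) (z : G) :
    ((-1 : ℤ) ^ (i + 1)) • z = -(((-1 : ℤ) ^ i) • z) := by
  rw [pow_succ, mul_neg_one, neg_zsmul]

section MyAdd

variable [Preadditive C] [HasFiniteBiproducts C]

local instance inst_s14 : HasBinaryBiproducts C := hasBinaryBiproducts_of_finite_biproducts C

lemma my_inAdd_zero [HasZeroObject C] (t : C) : inAdd t (0 : C) :=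
  ⟨0, 0, 0, (Limits.isZero_zero C).eq_of_src _ _⟩

lemma my_inAdd_of_iso {t x y : C} (e : x ≅ y) (hy : inAdd t y) : inAdd t x := by
  obtain ⟨n, i, r, hir⟩ := hy
  exact ⟨n, e.hom ≫ i, r ≫ e.inv, by
    rw [Category.assoc, ← Category.assoc i, hir, Category.id_comp, Iso.hom_inv_id]⟩

lemma my_inAdd_biprod {t x y : C} (hx : inAdd t x) (hy : inAdd t y) :
    inAdd t (x ⊞ y) := by
  obtain ⟨n, ix, rx, hx1⟩ := hx
  obtain ⟨m, iy, ry, hy1⟩ := hy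
  let u : (⨁ fun _ : Fin n => t) ⊞ (⨁ fun _ : Fin m => t) ⟶ ⨁ (fun _ : Fin (n + m) => t) :=
    biproduct.lift (fun k => Fin.addCases (motive := fun _ => _ ⟶ t)
      (fun k₁ => biprod.fst ≫ biproduct.π _ k₁) (fun k₂ => biprod.snd ≫ biproduct.π _ k₂) k)
  let v : (⨁ (fun _ : Fin (n + m) => t)) ⟶ (⨁ fun _ : Fin n => t) ⊞ (⨁ fun _ : Fin m => t) :=
    biprod.lift (biproduct.lift fun k₁ => biproduct.π _ (Fin.castAdd m k₁))
      (biproduct.lift fun k₂ => biproduct.π _ (Fin.natAdd n k₂))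
  have huv : u ≫ v = 𝟙 _ := by
    apply biprod.hom_ext
    · apply biproduct.hom_ext
      intro j
      simp [u, v]
    · apply biproduct.hom_ext
      intro j
      simp [u, v]
  refine ⟨n + m, biprod.map ix iy ≫ u, v ≫ biprod.map rx ry, ?_⟩
  have h1 : (biprod.map ix iy ≫ u) ≫ v ≫ biprod.map rx ry
      = biprod.map ix iy ≫ biprod.map rx ry := by
    rw [Category.assoc, ← Category.assoc u, huv, Category.id_comp]
  rw [h1]
  ext <;> simp [hx1, hy1]

lemma my_hom_zero_of_inAdd {t x c : C} (hx : inAdd t x) (h : ∀ f : t ⟶ c, f = 0)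
    (g : x ⟶ c) : g = 0 := by
  obtain ⟨n, i, r, hir⟩ := hx
  have hr : r ≫ g = 0 := by
    apply biproduct.hom_ext'
    intro j
    rw [comp_zero, ← Category.assoc]
    exact h _
  calc g = i ≫ r ≫ g := by rw [← Category.assoc, hir, Category.id_comp]
    _ = 0 := by rw [hr, comp_zero]

end MyAdd

section MyCover

variable [Preadditive C]

lemma my_isTCover_comp_iso {T : Set C} {x c c' : C} {f : x ⟶ c} (hf : IsTCover T f)
    (e : c ≅ c') : IsTCover T (f ≫ e.hom) := by
  obtain ⟨h1, h2, h3⟩ := hf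
  refine ⟨h1, fun x' hx' g => ?_, fun φ hφ => ?_⟩
  · obtain ⟨h, hh⟩ := h2 x' hx' (g ≫ e.inv)
    exact ⟨h, by rw [← Category.assoc, hh, Category.assoc, Iso.inv_hom_id, Category.comp_id]⟩
  · refine h3 φ ?_
    rw [← cancel_mono e.hom, Category.assoc]
    exact hφ

lemma my_isTCover_unique {T : Set C} {x x' c : C} {f : x ⟶ c} {f' : x' ⟶ c}
    (hf : IsTCover T f) (hf' : IsTCover T f') : ∃ e : x ≅ x', e.hom ≫ f' = f := by
  obtain ⟨hx, hfac, hmin⟩ := hf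
  obtain ⟨hx', hfac', hmin'⟩ := hf'
  obtain ⟨h, hh⟩ := hfac' x hx f
  obtain ⟨h', hh'⟩ := hfac x' hx' f'
  have h1 : IsIso (h ≫ h') := hmin _ (by rw [Category.assoc, hh', hh])
  have h2 : IsIso (h' ≫ h) := hmin' _ (by rw [Category.assoc, hh, hh'])
  have hab : h' ≫ inv (h ≫ h') = inv (h' ≫ h) ≫ h' := by
    rw [← cancel_epi (h' ≫ h)]
    calc (h' ≫ h) ≫ h' ≫ inv (h ≫ h')
        = h' ≫ (h ≫ h') ≫ inv (h ≫ h') := by simp only [Category.assoc]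
      _ = h' := by rw [IsIso.hom_inv_id, Category.comp_id]
      _ = (h' ≫ h) ≫ inv (h' ≫ h) ≫ h' := by rw [IsIso.hom_inv_id_assoc]
  have hiso : IsIso h := by
    refine ⟨⟨h' ≫ inv (h ≫ h'), ?_, ?_⟩⟩
    · rw [← Category.assoc, IsIso.hom_inv_id]
    · rw [hab, Category.assoc, IsIso.inv_hom_id]
  exact ⟨asIso h, hh⟩

lemma my_isTCover_zero [HasZeroObject C] {T : Set C} (h0 : (0 : C) ∈ T) {c : C}
    (hvan : ∀ x ∈ T, ∀ g : x ⟶ c, g = 0) : IsTCover T (0 : (0 : C) ⟶ c) := by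
  refine ⟨h0, fun x' hx' g => ⟨0, ?_⟩, fun φ _ => ?_⟩
  · rw [zero_comp]
    exact (hvan x' hx' g).symm
  · rw [show φ = 𝟙 (0 : C) from (Limits.isZero_zero C).eq_of_src _ _]
    infer_instance

end MyCover

section MyTri

variable [Preadditive C] [HasZeroObject C] [HasShift C ℤ]
  [∀ n : ℤ, (shiftFunctor C n).Additive] [Pretriangulated C]

lemma my_step_iso {T : Set C} {a b c a' b' c' : C} {f : a ⟶ b} {g : b ⟶ c}
    {h : c ⟶ a⟦(1 : ℤ)⟧} {f' : a' ⟶ b'} {g' : b' ⟶ c'} {h' : c' ⟶ a'⟦(1 : ℤ)⟧}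
    (hdist : Triangle.mk f g h ∈ distTriang C) (hdist' : Triangle.mk f' g' h' ∈ distTriang C)
    (hg : IsTCover T g) (hg' : IsTCover T g') (e : c ≅ c') :
    Nonempty (b ≅ b') ∧ Nonempty (a ≅ a') := by
  obtain ⟨eb, heb⟩ := my_isTCover_unique (my_isTCover_comp_iso hg e) hg'
  obtain ⟨φ, hφ1, hφ2⟩ := Pretriangulated.complete_distinguished_triangle_morphism
    (Triangle.mk f g h).rotate (Triangle.mk f' g' h').rotate
    (rot_of_distTriang _ hdist) (rot_of_distTriang _ hdist')
    eb.hom e.hom heb.symm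
  have hiso : IsIso φ := by
    have := isIso₃_of_isIso₁₂
      (⟨eb.hom, e.hom, φ, heb.symm, hφ1, hφ2⟩ :
        (Triangle.mk f g h).rotate ⟶ (Triangle.mk f' g' h').rotate)
      (rot_of_distTriang _ hdist) (rot_of_distTriang _ hdist')
      (Iso.isIso_hom eb) (Iso.isIso_hom e)
    exact this
  exact ⟨⟨eb⟩, ⟨(shiftFunctor C (1 : ℤ)).preimageIso (@asIso _ _ _ _ φ hiso)⟩⟩

lemma my_match_w {T : Set C} {m₁ m₂ : ℕ} {cobj₁ cobj₂ : ℕ → C}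
    (tw₁ : TriTower m₁ cobj₁) (tw₂ : TriTower m₂ cobj₂)
    (hc₁ : ∀ i < m₁, IsTCover T (tw₁.gmor i)) (hc₂ : ∀ i < m₂, IsTCover T (tw₂.gmor i))
    (δ : ℕ) (hbase : Nonempty (tw₁.w δ ≅ tw₂.w 0)) :
    ∀ j, j + δ ≤ m₁ → j ≤ m₂ → Nonempty (tw₁.w (j + δ) ≅ tw₂.w j) := by
  intro j
  induction j with
  | zero =>
    intro _ _
    rw [Nat.zero_add]
    exact hbase
  | succ j ih =>
    intro hj1 hj2
    obtain ⟨e⟩ := ih (by omega) (by omega)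
    have hst := (my_step_iso (tw₁.mem (j + δ) (by omega)) (tw₂.mem j (by omega))
      (hc₁ _ (by omega)) (hc₂ _ (by omega)) e).2
    have hidx : j + 1 + δ = j + δ + 1 := by omega
    rw [hidx]
    exact hst

lemma my_match_cobj {T : Set C} {m₁ m₂ : ℕ} {cobj₁ cobj₂ : ℕ → C}
    (tw₁ : TriTower m₁ cobj₁) (tw₂ : TriTower m₂ cobj₂)
    (hc₁ : ∀ i < m₁, IsTCover T (tw₁.gmor i)) (hc₂ : ∀ i < m₂, IsTCover T (tw₂.gmor i))
    (δ : ℕ) (hbase : Nonempty (tw₁.w δ ≅ tw₂.w 0))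
    (j : ℕ) (hj1 : j + δ < m₁) (hj2 : j < m₂) :
    Nonempty (cobj₁ (j + δ + 1) ≅ cobj₂ (j + 1)) := by
  obtain ⟨e⟩ := my_match_w tw₁ tw₂ hc₁ hc₂ δ hbase j (by omega) (by omega)
  exact (my_step_iso (tw₁.mem (j + δ) hj1) (tw₂.mem j hj2) (hc₁ _ hj1) (hc₂ _ hj2) e).1

lemma my_ind_congr_core [HasFiniteBiproducts C] (T : Set C) (e : ℕ) {G : Type*}
    [AddCommGroup G] (cls indC : C → G) (hcls : IsAddOn T cls)
    (hindC : IsIndex (e + 2) T cls indC) {c c' : C} (ecc : c ≅ c') : indC c = indC c' := by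
  obtain ⟨cobj, tw, hc0, hcov, htop, hsum⟩ := hindC c
  obtain ⟨cobj', tw', hc0', hcov', htop', hsum'⟩ := hindC c'
  have hbase : Nonempty (tw.w 0 ≅ tw'.w 0) :=
    ⟨eqToIso (tw.w_zero.trans hc0) ≪≫ ecc ≪≫ (eqToIso (tw'.w_zero.trans hc0')).symm⟩
  have hmemT : ∀ i, i < e + 1 → cobj (i + 1) ∈ T := fun i hi => (hcov i (by omega)).1
  have hmemT' : ∀ i, i < e + 1 → cobj' (i + 1) ∈ T := fun i hi => (hcov' i (by omega)).1
  rw [hsum, hsum']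
  refine Finset.sum_congr rfl ?_
  intro i hi
  rw [Finset.mem_range] at hi
  have hclseq : cls (cobj (i + 1)) = cls (cobj' (i + 1)) := by
    by_cases hie : i < e + 1
    · refine hcls.1 _ _ (hmemT i hie) (hmemT' i hie) ?_
      exact my_match_cobj tw tw' hcov hcov' 0 hbase i (by omega) (by omega)
    · have hieq : i = e + 1 := by omega
      subst hieq
      refine hcls.1 _ _ htop htop' ?_
      obtain ⟨ew⟩ := my_match_w tw tw' hcov hcov' 0 hbase (e + 1) (by omega) (by omega)
      exact ⟨eqToIso tw.w_top.symm ≪≫ ew ≪≫ eqToIso tw'.w_top⟩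
  rw [hclseq]

local instance [HasFiniteBiproducts C] : HasBinaryBiproducts C :=
  hasBinaryBiproducts_of_finite_biproducts C

lemma my_ind_shift_core [HasFiniteBiproducts C] (T : Set C) (e : ℕ) {G : Type*}
    [AddCommGroup G] (cls indC : C → G) (hcls : IsAddOn T cls)
    (hindC : IsIndex (e + 2) T cls indC)
    (hzero : (0 : C) ∈ T)
    (hisoT : ∀ x y : C, (x ≅ y) → y ∈ T → x ∈ T)
    (hbiprodT : ∀ x y : C, x ∈ T → y ∈ T → (x ⊞ y) ∈ T)
    (hext : ∀ x y : C, x ∈ T → y ∈ T → ∀ f : x ⟶ y⟦(1 : ℤ)⟧, f = 0)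
    (s' : C) (hvan : ∀ x ∈ T, ∀ f : x ⟶ s'⟦(1 : ℤ)⟧, f = 0) :
    indC (s'⟦(1 : ℤ)⟧) = - indC s' := by
  obtain ⟨cobj, tw, hc0, hcov, htop, hsum⟩ := hindC s'
  obtain ⟨cobj', tw', hc0', hcov', htop', hsum'⟩ := hindC (s'⟦(1 : ℤ)⟧)
  have hz2 : IsZero ((0 : C) ⊞ (0 : C)) := by
    rw [IsZero.iff_id_eq_zero]
    apply biprod.hom_ext' <;> exact (Limits.isZero_zero C).eq_of_src _ _
  have hcls0 : cls (0 : C) = 0 := by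
    have h1 : cls ((0 : C) ⊞ 0) = cls 0 + cls 0 := hcls.2 _ _ hzero hzero
    have h2 : cls ((0 : C) ⊞ 0) = cls 0 := hcls.1 _ _ (hbiprodT _ _ hzero hzero) hzero ⟨hz2.isoZero⟩
    have h3 : cls (0 : C) + cls 0 = cls 0 + 0 := by rw [add_zero]; exact h1.symm.trans h2
    exact add_left_cancel h3
  have hvan0 : ∀ x ∈ T, ∀ g : x ⟶ tw'.w 0, g = 0 := by
    rw [show tw'.w 0 = s'⟦(1 : ℤ)⟧ from tw'.w_zero.trans hc0']
    exact hvan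
  have hcov0 : IsTCover T (0 : (0 : C) ⟶ tw'.w 0) := my_isTCover_zero hzero hvan0
  have hTc : Triangle.mk (0 : s' ⟶ (0 : C)) (0 : (0 : C) ⟶ s'⟦(1 : ℤ)⟧)
      (-(𝟙 s')⟦(1 : ℤ)⟧') ∈ distTriang C :=
    rot_of_distTriang _ (Pretriangulated.contractible_distinguished s')
  have hcovTc : IsTCover T (0 : (0 : C) ⟶ s'⟦(1 : ℤ)⟧) := my_isTCover_zero hzero hvan
  have hbase1 : Nonempty (tw'.w 1 ≅ tw.w 0) := by
    obtain ⟨e1⟩ := (my_step_iso (tw'.mem 0 (by omega)) hTc (hcov' 0 (by omega)) hcovTc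
      (eqToIso (tw'.w_zero.trans hc0'))).2
    exact ⟨e1 ≪≫ eqToIso ((tw.w_zero.trans hc0).symm)⟩
  have hmem' : ∀ i, i < e + 1 → cobj' (i + 1) ∈ T := fun i hi => (hcov' i (by omega)).1
  have hmem : ∀ i, i < e + 1 → cobj (i + 1) ∈ T := fun i hi => (hcov i (by omega)).1
  have hwtop : tw.w (e + 1) ∈ T := by
    rw [show tw.w (e + 1) = cobj (e + 2) from tw.w_top]
    exact htop
  have hWe' : Nonempty (tw'.w (e + 1) ≅ tw.w e) :=
    my_match_w tw' tw hcov' hcov 1 hbase1 e (by omega) (by omega)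
  obtain ⟨ew⟩ := hWe'
  have hwe : tw.w e ∈ T := hisoT _ _ (ew.symm ≪≫ eqToIso tw'.w_top) htop'
  have h3 : tw.hmor e = 0 := hext _ _ hwe hwtop (tw.hmor e)
  obtain ⟨esp, -, -⟩ := Pretriangulated.exists_iso_binaryBiproduct_of_distTriang
    _ (tw.mem e (by omega)) h3
  have hsplit : cls (cobj (e + 1)) = cls (cobj (e + 2)) + cls (tw.w e) := by
    have h4 : cls (cobj (e + 1)) = cls (tw.w (e + 1) ⊞ tw.w e) :=
      hcls.1 _ _ (hmem e (by omega)) (hbiprodT _ _ hwtop hwe) ⟨esp⟩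
    rw [h4, hcls.2 _ _ hwtop hwe, show tw.w (e + 1) = cobj (e + 2) from tw.w_top]
  have fact0 : cls (cobj' 1) = 0 := by
    obtain ⟨e₀, -⟩ := my_isTCover_unique (hcov' 0 (by omega)) hcov0
    exact (hcls.1 _ _ (hmem' 0 (by omega)) hzero ⟨e₀⟩).trans hcls0
  have factMid : ∀ i, i < e → cls (cobj' (i + 1 + 1)) = cls (cobj (i + 1)) := by
    intro i hi
    exact hcls.1 _ _ (hmem' (i + 1) (by omega)) (hmem i (by omega))
      (my_match_cobj tw' tw hcov' hcov 1 hbase1 i (by omega) (by omega))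
  have factTop : cls (cobj' (e + 1 + 1)) = cls (cobj (e + 1)) - cls (cobj (e + 2)) := by
    have h5 : cls (cobj' (e + 1 + 1)) = cls (tw.w e) :=
      hcls.1 _ _ htop' hwe ⟨(eqToIso tw'.w_top).symm ≪≫ ew⟩
    rw [h5, hsplit]
    abel
  have eq1 : ∑ i ∈ Finset.range (e + 2), ((-1 : ℤ) ^ i) • cls (cobj' (i + 1))
      = (∑ i ∈ Finset.range e, -(((-1 : ℤ) ^ i) • cls (cobj (i + 1))))
        + (((-1 : ℤ) ^ (e + 1)) • cls (cobj (e + 1))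
            - ((-1 : ℤ) ^ (e + 1)) • cls (cobj (e + 2))) := by
    rw [show e + 2 = e + 1 + 1 from rfl,
      Finset.sum_range_succ' (fun i => ((-1 : ℤ) ^ i) • cls (cobj' (i + 1))) (e + 1)]
    rw [fact0, smul_zero, add_zero]
    rw [Finset.sum_range_succ]
    rw [factTop, smul_sub]
    congr 1
    refine Finset.sum_congr rfl ?_
    intro i hi
    rw [Finset.mem_range] at hi
    rw [factMid i hi, my_neg_pow_succ_smul]
  have eq2 : -(∑ i ∈ Finset.range (e + 2), ((-1 : ℤ) ^ i) • cls (cobj (i + 1)))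
      = (∑ i ∈ Finset.range e, -(((-1 : ℤ) ^ i) • cls (cobj (i + 1))))
        + (((-1 : ℤ) ^ (e + 1)) • cls (cobj (e + 1))
            - ((-1 : ℤ) ^ (e + 1)) • cls (cobj (e + 2))) := by
    rw [show e + 2 = e + 1 + 1 from rfl]
    rw [Finset.sum_range_succ (fun i => ((-1 : ℤ) ^ i) • cls (cobj (i + 1))) (e + 1)]
    rw [Finset.sum_range_succ (fun i => ((-1 : ℤ) ^ i) • cls (cobj (i + 1))) e]
    rw [Finset.sum_neg_distrib, my_neg_pow_succ_smul e (cls (cobj (e + 1)))]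
    abel
  rw [hsum', hsum, eq1, eq2]

end MyTri

end MyHelpers

open ZeroObject in
theorem stmt14 (k : Type*) [Field k] [Preadditive C] [CategoryTheory.Linear k C] [HasZeroObject C]
    [HasShift C ℤ] [∀ n : ℤ, (shiftFunctor C n).Additive] [Pretriangulated C]
    [HasFiniteBiproducts C] [IsIdempotentComplete C]
    [∀ X Y : C, FiniteDimensional k (X ⟶ Y)]
    (d : ℕ) (hd : 1 ≤ d) (t : C) (ht : IsClusterTiltingObj (2 * d) t)
    (Sset : Set C) (hS : IsClusterTiltingSub d Sset)
    (hSshift : ∀ s : C, s ∈ Sset ↔ s⟦(d : ℤ)⟧ ∈ Sset) (htS : t ∈ Sset)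
    {G : Type*} [AddCommGroup G] (cls indC : C → G)
    (hcls : IsAddOn {x : C | inAdd t x} cls)
    (hindC : IsIndex (2 * d) {x : C | inAdd t x} cls indC)
    (s : C) (hs : s ∈ Sset) (i : ℕ) (hi : i ≤ d - 1) :
    indC (s⟦(i : ℤ)⟧) = ((-1 : ℤ) ^ i) • indC s := by
  obtain ⟨e, he⟩ : ∃ e, 2 * d = e + 2 := ⟨2 * d - 2, by omega⟩
  rw [he] at hindC
  have hext : ∀ x y : C, x ∈ {x : C | inAdd t x} → y ∈ {x : C | inAdd t x} →
      ∀ f : x ⟶ y⟦(1 : ℤ)⟧, f = 0 := by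
    intro x y hx hy f
    exact (ht.mem_iff_ext₁ y).mp hy 1 le_rfl (by omega) x hx f
  have hT0 : (0 : C) ∈ {x : C | inAdd t x} := my_inAdd_zero t
  have hTiso : ∀ x y : C, (x ≅ y) → y ∈ {x : C | inAdd t x} → x ∈ {x : C | inAdd t x} :=
    fun x y exy hy => my_inAdd_of_iso exy hy
  have hTbi : ∀ x y : C, x ∈ {x : C | inAdd t x} → y ∈ {x : C | inAdd t x} →
      (x ⊞ y) ∈ {x : C | inAdd t x} := fun x y hx hy => my_inAdd_biprod hx hy
  have key : ∀ i : ℕ, i ≤ d - 1 → indC (s⟦(i : ℤ)⟧) = ((-1 : ℤ) ^ i) • indC s := by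
    intro i
    induction i with
    | zero =>
      intro _
      have e0 : s⟦((0 : ℕ) : ℤ)⟧ ≅ s := (shiftFunctorZero' C ((0 : ℕ) : ℤ) (by simp)).app s
      calc indC (s⟦((0 : ℕ) : ℤ)⟧) = indC s := my_ind_congr_core _ e cls indC hcls hindC e0
        _ = ((-1 : ℤ) ^ (0 : ℕ)) • indC s := by rw [pow_zero, one_smul]
    | succ i ih =>
      intro h
      have hiso : s⟦((i + 1 : ℕ) : ℤ)⟧ ≅ (s⟦(i : ℤ)⟧)⟦(1 : ℤ)⟧ :=
        (shiftFunctorAdd' C (i : ℤ) 1 ((i + 1 : ℕ) : ℤ) (by push_cast; ring)).app s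
      have hvan : ∀ x ∈ {x : C | inAdd t x}, ∀ f : x ⟶ (s⟦(i : ℤ)⟧)⟦(1 : ℤ)⟧, f = 0 := by
        intro x hx f
        refine my_hom_zero_of_inAdd hx ?_ f
        intro f'
        have hv : f' ≫ hiso.inv = 0 :=
          (hS.mem_iff_ext₁ s).mp hs (i + 1) (by omega) (by omega) t htS (f' ≫ hiso.inv)
        have h2 := congrArg (fun z => z ≫ hiso.hom) hv
        simpa using h2
      calc indC (s⟦((i + 1 : ℕ) : ℤ)⟧)
          = indC ((s⟦(i : ℤ)⟧)⟦(1 : ℤ)⟧) := my_ind_congr_core _ e cls indC hcls hindC hiso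
        _ = - indC (s⟦(i : ℤ)⟧) :=
            my_ind_shift_core _ e cls indC hcls hindC hT0 hTiso hTbi hext _ hvan
        _ = ((-1 : ℤ) ^ (i + 1)) • indC s := by
            rw [ih (by omega), my_neg_pow_succ_smul]
  exact key i hi
end
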